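/- Let (r,m) be a point with Pr(ℛ(K(r,m))) > 0. The Elga probability Pr^Elga_{(r,m)} equals the extended HT probability on the points of K(r,m) if and only if n_{(r,m)}(r₁) = n_{(r,m)}(r₂) for all runs r₁, r₂ ∈ ℛ(K(r,m)) with Pr({r₁}) ≠ 0 and Pr({r₂}) ≠ 0. -/
import Mathlib


open scoped Classical

namespace SBP

variable {L : Type*}

/-- A point: a run together with a time. -/
abbrev Point (L : Type*) := (ℕ → L) × ℕ

/-- The information set `K(r,m)`: all points `(r',m')` with `r' ∈ ℛ` and `r' m' = r m`. -/
def K (ℛ : Finset (ℕ → L)) (r : ℕ → L) (m : ℕ) : Set (Point L) :=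
  {p | p.1 ∈ ℛ ∧ p.1 p.2 = r m}

/-- `ℛ(U)`: the runs of `ℛ` passing through some point of `U`. -/
noncomputable def runsOf (ℛ : Finset (ℕ → L)) (U : Set (Point L)) : Finset (ℕ → L) :=
  ℛ.filter fun r' => ∃ m', (r', m') ∈ U

/-- A system is synchronous if indistinguishable points occur at the same time. -/
def Synchronous (ℛ : Finset (ℕ → L)) : Prop :=
  ∀ r ∈ ℛ, ∀ r' ∈ ℛ, ∀ m m' : ℕ, r m = r' m' → m = m'

/-- The local-state sequence of run `r` at time `m`:
`r 0, r 1, …, r m` with consecutive repetitions removed. -/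
noncomputable def lseq (r : ℕ → L) (m : ℕ) : List L :=
  ((List.range (m + 1)).map r).destutter (· ≠ ·)

/-- Perfect recall: indistinguishable points have the same local-state sequence. -/
def PerfectRecall (ℛ : Finset (ℕ → L)) : Prop :=
  ∀ r ∈ ℛ, ∀ r' ∈ ℛ, ∀ m m' : ℕ, r m = r' m' → lseq r m = lseq r' m'

/-- A run-based event: contains all points of a run or none of them. -/
def RunBased (U : Set (Point L)) : Prop :=
  ∀ (r' : ℕ → L) (k k' : ℕ), (r', k) ∈ U → (r', k') ∈ U

/-- The probability of a (finite) set of runs. -/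
noncomputable def PrS (pr : (ℕ → L) → ℝ) (S : Finset (ℕ → L)) : ℝ := ∑ r ∈ S, pr r

/-- `n_{(r,m)}(r')`: the number of points of the information set `K(r,m)` lying on run `r'`. -/
noncomputable def npts (r : ℕ → L) (m : ℕ) (r' : ℕ → L) : ℕ :=
  Nat.card {k : ℕ | r' k = r m}

/-- The Elga probability of a single point, for the agent at the point `(r,m)`. -/
noncomputable def elga (ℛ : Finset (ℕ → L)) (pr : (ℕ → L) → ℝ) (r : ℕ → L) (m : ℕ)
    (p : Point L) : ℝ :=
  if p ∈ K ℛ r m then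
    pr p.1 / ∑ r'' ∈ runsOf ℛ (K ℛ r m), pr r'' * (npts r m r'' : ℝ)
  else 0

/-- The Elga probability equals the extended HT probability on the points of `K(r,m)`
iff all runs through `K(r,m)` of nonzero probability contain the same number of points
of `K(r,m)`. -/
theorem elga_eq_htExt_iff (ℛ : Finset (ℕ → L)) (hne : ℛ.Nonempty)
    (pr : (ℕ → L) → ℝ) (hnn : ∀ r' ∈ ℛ, 0 ≤ pr r') (hsum : ∑ r' ∈ ℛ, pr r' = 1)
    (hfin : ∀ r' ∈ ℛ, ∀ s ∈ ℛ, ∀ m : ℕ, {k : ℕ | r' k = s m}.Finite)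
    (r : ℕ → L) (hr : r ∈ ℛ) (m : ℕ)
    (hpos : 0 < PrS pr (runsOf ℛ (K ℛ r m))) :
    (∀ p ∈ K ℛ r m,
        elga ℛ pr r m p =
          pr p.1 / (PrS pr (runsOf ℛ (K ℛ r m)) * (npts r m p.1 : ℝ))) ↔
    (∀ r₁ ∈ runsOf ℛ (K ℛ r m), ∀ r₂ ∈ runsOf ℛ (K ℛ r m),
        pr r₁ ≠ 0 → pr r₂ ≠ 0 → npts r m r₁ = npts r m r₂) := by
  constructor
  · intro h r₁ h₁ r₂ h₂ hp1 hp2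
    obtain ⟨hr₁R, m₁, hm₁⟩ := Finset.mem_filter.mp h₁
    obtain ⟨hr₂R, m₂, hm₂⟩ := Finset.mem_filter.mp h₂
    have e₁ := h (r₁, m₁) hm₁
    have e₂ := h (r₂, m₂) hm₂
    rw [elga, if_pos hm₁] at e₁
    rw [elga, if_pos hm₂] at e₂
    have key : ∀ a x y : ℝ, a ≠ 0 → a / x = a / y → x = y := by
      intro a x y ha hxy
      have h2 := congrArg (·⁻¹) hxy
      simp only [inv_div] at h2
      have h3 := congrArg (· * a) h2
      simpa [div_mul_cancel₀, ha] using h3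
    have k₁ := key _ _ _ hp1 e₁
    have k₂ := key _ _ _ hp2 e₂
    have hmm : PrS pr (runsOf ℛ (K ℛ r m)) * (npts r m r₁ : ℝ)
        = PrS pr (runsOf ℛ (K ℛ r m)) * (npts r m r₂ : ℝ) := by rw [← k₁, ← k₂]
    have := mul_left_cancel₀ (ne_of_gt hpos) hmm
    exact_mod_cast this
  · intro h p hp
    rw [elga, if_pos hp]
    by_cases hz : pr p.1 = 0
    · rw [hz]; simp
    · congr 1
      have hpS : p.1 ∈ runsOf ℛ (K ℛ r m) :=
        Finset.mem_filter.mpr ⟨hp.1, p.2, hp⟩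
      rw [PrS, Finset.sum_mul]
      apply Finset.sum_congr rfl
      intro r'' hr''
      by_cases hz'' : pr r'' = 0
      · rw [hz'']; ring
      · rw [h r'' hr'' p.1 hpS hz'' hz]

end SBP
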